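/- arXiv:1610.05603 — 7 statements merged into one kernel-verified Lean document; each statement's English description precedes it below -/
import Mathlib

section
/- Attacks on a composed table decompose: for tables t1 (with c1 columns) and t2 (with c2 columns), ℓ ≤ min(c1,c2), and m ≥ 0, a table t satisfies t ⟶_m (t1 ⋈_ℓ t2) if and only if there exist m1, m2 with m1 + m2 = m and tables t1', t2' with t1' ⟶_{m1} t1 and t2' ⟶_{m2} t2 such that t = t1' ⋈_ℓ t2'. -/
/-- XOR-sum of a Boolean row (entries in `ZMod 2`). -/
def xorSum {N : ℕ} (r : Fin N → ZMod 2) : ZMod 2 := ∑ i, r i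

/-- Reduction: keep only the rows with bit `b` at column `j`. -/
def reduce {N : ℕ} (j : Fin N) (b : ZMod 2) (t : Multiset (Fin N → ZMod 2)) :
    Multiset (Fin N → ZMod 2) :=
  t.filter (fun r => r j = b)

/-- `(1,m,N)`-safety: after any `m` reductions, equally many rows XOR-sum to 0 and to 1. -/
def safeB {N : ℕ} : ℕ → Multiset (Fin N → ZMod 2) → Prop
  | 0, t => (t.filter (fun r => xorSum r = 0)).card = (t.filter (fun r => xorSum r = 1)).card
  | m + 1, t => ∀ (j : Fin N) (c : ZMod 2), safeB m (reduce j c t)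

/-- Index of the `j`-th entry of the `i`-th block of size `ℓ`. -/
def blockIdx {N x ℓ : ℕ} (hN : x * ℓ ≤ N) (i : Fin x) (j : Fin ℓ) : Fin N :=
  ⟨i.1 * ℓ + j.1, by
    have h1 : i.1 * ℓ + j.1 < (i.1 + 1) * ℓ := by
      calc i.1 * ℓ + j.1 < i.1 * ℓ + ℓ := Nat.add_lt_add_left j.2 _
        _ = (i.1 + 1) * ℓ := (Nat.succ_mul i.1 ℓ).symm
    exact lt_of_lt_of_le h1 (le_trans (Nat.mul_le_mul i.2 (Nat.le_refl ℓ)) hN)⟩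

/-- XOR-sum of the `i`-th block of `ℓ` entries of a row. -/
def blockSum {N x ℓ : ℕ} (hN : x * ℓ ≤ N) (i : Fin x) (r : Fin N → ZMod 2) : ZMod 2 :=
  ∑ j : Fin ℓ, r (blockIdx hN i j)

/-- The `b`-restriction of `t` w.r.t. block size `ℓ`. -/
def restrict {N x ℓ : ℕ} (hN : x * ℓ ≤ N) (b : Fin x → ZMod 2)
    (t : Multiset (Fin N → ZMod 2)) : Multiset (Fin N → ZMod 2) :=
  t.filter (fun r => ∀ i, blockSum hN i r = b i)

/-- `(x,m,ℓ)`-safety. -/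
def safe {N x ℓ : ℕ} (hN : x * ℓ ≤ N) : ℕ → Multiset (Fin N → ZMod 2) → Prop
  | 0, t => ∀ b b' : Fin x → ZMod 2, (restrict hN b t).card = (restrict hN b' t).card
  | m + 1, t => ∀ (j : Fin N) (c : ZMod 2), safe hN m (reduce j c t)

/-- `Reduces m s t`: `t` is obtained from `s` by `m` reductions. -/
inductive Reduces {N : ℕ} : ℕ → Multiset (Fin N → ZMod 2) → Multiset (Fin N → ZMod 2) → Prop
  | refl (t) : Reduces 0 t t
  | step {m t t'} (j : Fin N) (b : ZMod 2) : Reduces m t t' → Reduces (m + 1) t (reduce j b t')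

/-- Join of two tables matching the last `L` columns of the first table
with the first `L` columns of the second. -/
def join {c1 c2 L : ℕ} (h1 : L ≤ c1) (h2 : L ≤ c2)
    (t1 : Multiset (Fin c1 → ZMod 2)) (t2 : Multiset (Fin c2 → ZMod 2)) :
    Multiset (Fin (c1 + c2 - L) → ZMod 2) :=
  ∑ v : Fin (c1 + c2 - L) → ZMod 2,
    Multiset.replicate
      ((t1.count (fun i : Fin c1 => v ⟨i.1, by have := i.2; omega⟩)) *
       (t2.count (fun i : Fin c2 => v ⟨c1 - L + i.1, by have := i.2; omega⟩))) v

/-- Full join of two tables on all columns. -/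
def fullJoin {N : ℕ} (t1 t2 : Multiset (Fin N → ZMod 2)) : Multiset (Fin N → ZMod 2) :=
  ∑ v : Fin N → ZMod 2, Multiset.replicate (t1.count v * t2.count v) v

/-- Projection to the last `m` columns. -/
def lastProj {N m : ℕ} (h : m ≤ N) (r : Fin N → ZMod 2) : Fin m → ZMod 2 :=
  fun j => r ⟨N - m + j.1, by have := j.2; omega⟩

/-- XOR-sum of the last `m` columns. -/
def lastSum {N m : ℕ} (h : m ≤ N) (r : Fin N → ZMod 2) : ZMod 2 :=
  xorSum (lastProj h r)

/-- Delete column `j` of an (n+1)-column row. -/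
def deleteCol {n : ℕ} (j : Fin (n + 1)) (r : Fin (n + 1) → ZMod 2) : Fin n → ZMod 2 :=
  fun i => r (j.succAbove i)

section Aux

variable {c1 c2 L : ℕ} (h1 : L ≤ c1) (h2 : L ≤ c2)

/-- First-part projection. -/
def proj1 (v : Fin (c1 + c2 - L) → ZMod 2) : Fin c1 → ZMod 2 :=
  fun i : Fin c1 => v ⟨i.1, by have := i.2; omega⟩

/-- Second-part projection. -/
def proj2 (v : Fin (c1 + c2 - L) → ZMod 2) : Fin c2 → ZMod 2 :=
  fun i : Fin c2 => v ⟨c1 - L + i.1, by have := i.2; omega⟩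

lemma count_join (t1 : Multiset (Fin c1 → ZMod 2)) (t2 : Multiset (Fin c2 → ZMod 2))
    (v : Fin (c1 + c2 - L) → ZMod 2) :
    (join h1 h2 t1 t2).count v = t1.count (proj1 h1 h2 v) * t2.count (proj2 h1 h2 v) := by
  unfold join
  rw [Multiset.count_sum']
  simp only [Multiset.count_replicate]
  rw [Finset.sum_ite_eq' Finset.univ v]
  simp only [Finset.mem_univ, if_true]
  rfl

lemma reduce_join_left (t1 : Multiset (Fin c1 → ZMod 2)) (t2 : Multiset (Fin c2 → ZMod 2))
    (j : Fin c1) (b : ZMod 2) :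
    reduce ⟨j.1, by have := j.2; omega⟩ b (join h1 h2 t1 t2) =
      join h1 h2 (reduce j b t1) t2 := by
  ext v
  rw [reduce, Multiset.count_filter, count_join, count_join, reduce, Multiset.count_filter]
  by_cases h : v ⟨j.1, by have := j.2; omega⟩ = b
  · rw [if_pos h, if_pos (show proj1 h1 h2 v j = b from h)]
  · rw [if_neg h, if_neg (show ¬proj1 h1 h2 v j = b from h), zero_mul]

lemma reduce_join_right (t1 : Multiset (Fin c1 → ZMod 2)) (t2 : Multiset (Fin c2 → ZMod 2))
    (j : Fin c2) (b : ZMod 2) :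
    reduce ⟨c1 - L + j.1, by have := j.2; omega⟩ b (join h1 h2 t1 t2) =
      join h1 h2 t1 (reduce j b t2) := by
  ext v
  rw [reduce, Multiset.count_filter, count_join, count_join, reduce, Multiset.count_filter]
  by_cases h : v ⟨c1 - L + j.1, by have := j.2; omega⟩ = b
  · rw [if_pos h, if_pos (show proj2 h1 h2 v j = b from h)]
  · rw [if_neg h, if_neg (show ¬proj2 h1 h2 v j = b from h), mul_zero]

lemma reduces_join {m1 m2 : ℕ} {t1 t1' : Multiset (Fin c1 → ZMod 2)}
    {t2 t2' : Multiset (Fin c2 → ZMod 2)}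
    (r1 : Reduces m1 t1 t1') (r2 : Reduces m2 t2 t2') :
    Reduces (m1 + m2) (join h1 h2 t1 t2) (join h1 h2 t1' t2') := by
  induction r2 with
  | refl t =>
    induction r1 with
    | refl s => exact .refl _
    | step j b h ih =>
      rw [← reduce_join_left]
      exact .step _ _ ih
  | step j b h ih =>
    rw [← reduce_join_right]
    exact .step _ _ ih

lemma reduces_join_fwd {m : ℕ} {s t : Multiset (Fin (c1 + c2 - L) → ZMod 2)}
    (h : Reduces m s t) :
    ∀ t1 t2, s = join h1 h2 t1 t2 →
      ∃ (m1 m2 : ℕ) (t1' : Multiset (Fin c1 → ZMod 2)) (t2' : Multiset (Fin c2 → ZMod 2)),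
        m1 + m2 = m ∧ Reduces m1 t1 t1' ∧ Reduces m2 t2 t2' ∧ t = join h1 h2 t1' t2' := by
  induction h with
  | refl t => exact fun t1 t2 hs => ⟨0, 0, t1, t2, rfl, .refl _, .refl _, hs⟩
  | step j b h ih =>
    intro t1 t2 hs
    obtain ⟨m1, m2, t1', t2', hm, r1, r2, ht⟩ := ih t1 t2 hs
    subst ht
    by_cases hj : j.1 < c1
    · refine ⟨m1 + 1, m2, reduce ⟨j.1, hj⟩ b t1', t2', by omega, .step _ _ r1, r2, ?_⟩
      rw [← reduce_join_left]
    · have hj2 : j.1 - (c1 - L) < c2 := by have := j.2; omega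
      refine ⟨m1, m2 + 1, t1', reduce ⟨j.1 - (c1 - L), hj2⟩ b t2', by omega, r1,
        .step _ _ r2, ?_⟩
      rw [← reduce_join_right]
      congr 1
      exact Fin.ext (by simp; omega)

end Aux

/-- attacks on a joined table decompose into attacks on the components. -/
theorem reduces_join_iff {c1 c2 L : ℕ} (h1 : L ≤ c1) (h2 : L ≤ c2) (m : ℕ)
    (t1 : Multiset (Fin c1 → ZMod 2)) (t2 : Multiset (Fin c2 → ZMod 2))
    (t : Multiset (Fin (c1 + c2 - L) → ZMod 2)) :
    Reduces m (join h1 h2 t1 t2) t ↔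
      ∃ (m1 m2 : ℕ) (t1' : Multiset (Fin c1 → ZMod 2)) (t2' : Multiset (Fin c2 → ZMod 2)),
        m1 + m2 = m ∧ Reduces m1 t1 t1' ∧ Reduces m2 t2 t2' ∧ t = join h1 h2 t1' t2' := by
  constructor
  · intro h
    exact reduces_join_fwd h1 h2 h t1 t2 rfl
  · rintro ⟨m1, m2, t1', t2', hm, r1, r2, rfl⟩
    exact hm ▸ reduces_join h1 h2 r1 r2
end

section
/- Let m1, m2 ≥ 0 with n = m1 + m2. Let t1 and t2 be tables each with exactly n+1 columns such that t1 is (1, m1, n+1)-safe and t2 is (1, m2, n+1)-safe. Then the join t1 ⋈ t2 (matching all n+1 columns, i.e., the multiset in which each vector b ∈ {0,1}^{n+1} occurs (multiplicity of b in t1)·(multiplicity of b in t2) times) is (1, 0, n+1)-safe: the number of its rows XOR-summing to 0 equals the number XOR-summing to 1. -/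
namespace FullJoinAux

/-- Sign of a bit. -/
def sgn (x : ZMod 2) : ℤ := if x = 0 then 1 else -1

lemma sgn_add (a b : ZMod 2) : sgn (a + b) = sgn a * sgn b := by revert a b; decide

lemma sgn_ne (a b : ZMod 2) (h : a ≠ b) : sgn a + sgn b = 0 := by revert a b; decide

/-- Character attached to a set of columns. -/
def chi {N : ℕ} (S : Finset (Fin N)) (v : Fin N → ZMod 2) : ℤ := ∏ i ∈ S, sgn (v i)

lemma chi_eq_sgn_sum {N : ℕ} (S : Finset (Fin N)) (v : Fin N → ZMod 2) :
    chi S v = sgn (∑ i ∈ S, v i) := by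
  classical
  induction S using Finset.induction_on with
  | empty => simp [chi, sgn]
  | insert a s h ih =>
    rw [chi, Finset.prod_insert h, Finset.sum_insert h, sgn_add, ← ih, chi]

/-- Signed Fourier coefficient of a table. -/
def F {N : ℕ} (S : Finset (Fin N)) (t : Multiset (Fin N → ZMod 2)) : ℤ :=
  (t.map (chi S)).sum

lemma F_add {N : ℕ} (S : Finset (Fin N)) (s t : Multiset (Fin N → ZMod 2)) :
    F S (s + t) = F S s + F S t := by
  simp [F]

lemma zmod2_cases (x : ZMod 2) : x = 0 ∨ x = 1 := by revert x; decide

lemma F_count {N : ℕ} (S : Finset (Fin N)) (t : Multiset (Fin N → ZMod 2)) :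
    F S t = ((t.filter fun r => (∑ i ∈ S, r i) = 0).card : ℤ)
      - ((t.filter fun r => (∑ i ∈ S, r i) = 1).card : ℤ) := by
  classical
  induction t using Multiset.induction_on with
  | empty => simp [F]
  | cons a s ih =>
    have hmap : F S (a ::ₘ s) = chi S a + F S s := by simp [F]
    rcases zmod2_cases (∑ i ∈ S, a i) with h | h <;>
    · rw [hmap, ih, chi_eq_sgn_sum, Multiset.filter_cons, Multiset.filter_cons, h]
      simp [sgn]
      push_cast
      ring

lemma reduce_split {N : ℕ} (j : Fin N) (t : Multiset (Fin N → ZMod 2)) :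
    reduce j 0 t + reduce j 1 t = t := by
  classical
  have h : reduce j 1 t = t.filter fun r => ¬ (r j = 0) := by
    apply Multiset.filter_congr
    intro r _
    rcases zmod2_cases (r j) with h | h <;> simp [h]
  rw [reduce, h, Multiset.filter_add_not]

lemma safeB_mono {n : ℕ} : ∀ (m : ℕ) (t : Multiset (Fin (n+1) → ZMod 2)),
    safeB (m+1) t → safeB m t := by
  intro m
  induction m with
  | zero =>
    intro t h
    have h0 := h 0 0
    have h1 := h 0 1
    show (t.filter fun r => xorSum r = 0).card = (t.filter fun r => xorSum r = 1).card
    have := reduce_split (0 : Fin (n+1)) t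
    calc (t.filter fun r => xorSum r = 0).card
        = ((reduce 0 0 t + reduce 0 1 t).filter fun r => xorSum r = 0).card := by rw [this]
      _ = ((reduce 0 0 t).filter fun r => xorSum r = 0).card
          + ((reduce 0 1 t).filter fun r => xorSum r = 0).card := by
            rw [Multiset.filter_add, Multiset.card_add]
      _ = ((reduce 0 0 t).filter fun r => xorSum r = 1).card
          + ((reduce 0 1 t).filter fun r => xorSum r = 1).card := by rw [h0, h1]
      _ = ((reduce 0 0 t + reduce 0 1 t).filter fun r => xorSum r = 1).card := by
            rw [Multiset.filter_add, Multiset.card_add]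
      _ = (t.filter fun r => xorSum r = 1).card := by rw [this]
  | succ m ih =>
    intro t h j c
    exact ih _ (h j c)

lemma F_reduce {N : ℕ} (j : Fin N) (b : ZMod 2) (S : Finset (Fin N)) (hj : j ∉ S)
    (t : Multiset (Fin N → ZMod 2)) :
    F S (reduce j b t) = sgn b * F (insert j S) (reduce j b t) := by
  classical
  have : ((reduce j b t).map (chi (insert j S))) =
      ((reduce j b t).map fun r => sgn b * chi S r) := by
    apply Multiset.map_congr rfl
    intro r hr
    have hrb : r j = b := (Multiset.mem_filter.mp hr).2
    rw [chi, Finset.prod_insert hj, hrb, chi]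
  have hb : sgn b * sgn b = 1 := by rcases zmod2_cases b with h | h <;> simp [h, sgn]
  rw [F, F, this, Multiset.sum_map_mul_left, ← mul_assoc, hb, one_mul]

lemma F_zero_of_safe {n : ℕ} : ∀ (m : ℕ) (t : Multiset (Fin (n+1) → ZMod 2)),
    safeB m t → ∀ S : Finset (Fin (n+1)), Sᶜ.card ≤ m → F S t = 0 := by
  intro m
  induction m with
  | zero =>
    intro t h S hS
    have : Sᶜ = ∅ := Finset.card_eq_zero.mp (Nat.le_zero.mp hS)
    have hSu : S = Finset.univ := by
      have := congrArg (·ᶜ) this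
      simpa using this
    subst hSu
    have h0 : (t.filter fun r => xorSum r = 0).card = (t.filter fun r => xorSum r = 1).card := h
    rw [F_count]
    have e : ∀ r : Fin (n+1) → ZMod 2, (∑ i ∈ Finset.univ, r i) = xorSum r := fun r => rfl
    simp only [e, h0]
    omega
  | succ m ih =>
    intro t h S hS
    by_cases hle : Sᶜ.card ≤ m
    · exact ih t (safeB_mono m t h) S hle
    · have hcard : Sᶜ.card = m + 1 := by omega
      have hne : Sᶜ.Nonempty := Finset.card_pos.mp (by omega)
      obtain ⟨j, hj⟩ := hne
      have hjS : j ∉ S := Finset.mem_compl.mp hj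
      have hins : (insert j S)ᶜ.card ≤ m := by
        rw [Finset.compl_insert, Finset.card_erase_of_mem hj, hcard]
        omega
      have z0 : F (insert j S) (reduce j 0 t) = 0 := ih _ (h j 0) _ hins
      have z1 : F (insert j S) (reduce j 1 t) = 0 := ih _ (h j 1) _ hins
      calc F S t = F S (reduce j 0 t + reduce j 1 t) := by rw [reduce_split]
        _ = F S (reduce j 0 t) + F S (reduce j 1 t) := F_add _ _ _
        _ = sgn 0 * F (insert j S) (reduce j 0 t)
            + sgn 1 * F (insert j S) (reduce j 1 t) := by
              rw [F_reduce j 0 S hjS, F_reduce j 1 S hjS]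
        _ = 0 := by rw [z0, z1]; ring

lemma F_eq_sum_count {N : ℕ} (S : Finset (Fin N)) (t : Multiset (Fin N → ZMod 2)) :
    F S t = ∑ v : Fin N → ZMod 2, (t.count v : ℤ) * chi S v := by
  classical
  rw [F, Finset.sum_multiset_map_count]
  rw [Finset.sum_subset (Finset.subset_univ t.toFinset)]
  · simp [mul_comm]
  · intro v _ hv
    rw [Multiset.count_eq_zero_of_notMem (by simpa using hv)]
    simp

lemma count_fullJoin {N : ℕ} (t1 t2 : Multiset (Fin N → ZMod 2)) (v : Fin N → ZMod 2) :
    (fullJoin t1 t2).count v = t1.count v * t2.count v := by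
  classical
  rw [fullJoin, Multiset.count_sum']
  rw [Finset.sum_eq_single v]
  · simp [Multiset.count_replicate]
  · intro u _ hu
    rw [Multiset.count_replicate, if_neg (fun h => hu h)]
  · simp

lemma sum_chi_mul {N : ℕ} (v w : Fin N → ZMod 2) :
    ∑ S : Finset (Fin N), chi S v * chi Sᶜ w = ∏ i : Fin N, (sgn (v i) + sgn (w i)) := by
  classical
  rw [Finset.prod_add]
  rw [Finset.powerset_univ]
  apply Finset.sum_congr rfl
  intro S _
  rw [chi, chi, ← Finset.compl_eq_univ_sdiff]

lemma sum_chi_diag {N : ℕ} (v : Fin N → ZMod 2) :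
    ∑ S : Finset (Fin N), chi S v * chi Sᶜ v = 2 ^ N * chi Finset.univ v := by
  rw [sum_chi_mul]
  have : ∀ i : Fin N, sgn (v i) + sgn (v i) = 2 * sgn (v i) := fun i => by ring
  simp only [this]
  rw [Finset.prod_mul_distrib, Finset.prod_const, chi]
  simp

lemma sum_chi_off {N : ℕ} (v w : Fin N → ZMod 2) (h : v ≠ w) :
    ∑ S : Finset (Fin N), chi S v * chi Sᶜ w = 0 := by
  rw [sum_chi_mul]
  obtain ⟨i, hi⟩ := Function.ne_iff.mp h
  exact Finset.prod_eq_zero (Finset.mem_univ i) (sgn_ne _ _ hi)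

lemma plancherel {N : ℕ} (t1 t2 : Multiset (Fin N → ZMod 2)) :
    ∑ S : Finset (Fin N), F S t1 * F Sᶜ t2 = 2 ^ N * F Finset.univ (fullJoin t1 t2) := by
  classical
  have e1 : ∀ S : Finset (Fin N),
      F S t1 * F Sᶜ t2 = ∑ v : Fin N → ZMod 2, ∑ w : Fin N → ZMod 2,
        (t1.count v : ℤ) * (t2.count w : ℤ) * (chi S v * chi Sᶜ w) := by
    intro S
    rw [F_eq_sum_count, F_eq_sum_count, Finset.sum_mul_sum]
    apply Finset.sum_congr rfl; intro v _
    apply Finset.sum_congr rfl; intro w _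
    ring
  simp only [e1]
  rw [Finset.sum_comm]
  have e2 : ∀ v : Fin N → ZMod 2,
      (∑ S : Finset (Fin N), ∑ w : Fin N → ZMod 2,
        (t1.count v : ℤ) * (t2.count w : ℤ) * (chi S v * chi Sᶜ w))
      = (t1.count v : ℤ) * (t2.count v : ℤ) * (2 ^ N * chi Finset.univ v) := by
    intro v
    rw [Finset.sum_comm, Finset.sum_eq_single v]
    · rw [← Finset.mul_sum, sum_chi_diag]
    · intro w _ hw
      rw [← Finset.mul_sum, sum_chi_off v w (Ne.symm hw), mul_zero]
    · simp
  simp only [e2]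
  rw [F_eq_sum_count, Finset.mul_sum]
  apply Finset.sum_congr rfl
  intro v _
  rw [count_fullJoin]
  push_cast
  ring

end FullJoinAux

/-- joining a (1,m1,n+1)-safe table with a (1,m2,n+1)-safe table
(with n = m1 + m2) on all n+1 columns yields a (1,0,n+1)-safe table. -/
theorem fullJoin_safe (n m1 m2 : ℕ) (hn : n = m1 + m2)
    (t1 t2 : Multiset (Fin (n + 1) → ZMod 2))
    (h1 : safeB m1 t1) (h2 : safeB m2 t2) :
    safeB 0 (fullJoin t1 t2) := by
  classical
  open FullJoinAux in
  have key : ∑ S : Finset (Fin (n+1)), F S t1 * F Sᶜ t2 = 0 := by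
    apply Finset.sum_eq_zero
    intro S _
    have hcards : S.card + Sᶜ.card = n + 1 := by
      have := Finset.card_add_card_compl S
      simpa using this
    by_cases hc : Sᶜ.card ≤ m1
    · rw [F_zero_of_safe m1 t1 h1 S hc, zero_mul]
    · have : (Sᶜ)ᶜ.card ≤ m2 := by rw [compl_compl]; omega
      rw [F_zero_of_safe m2 t2 h2 Sᶜ this, mul_zero]
  rw [FullJoinAux.plancherel] at key
  have h2n : (2 : ℤ) ^ (n+1) ≠ 0 := by positivity
  have hF : FullJoinAux.F Finset.univ (fullJoin t1 t2) = 0 := by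
    rcases mul_eq_zero.mp key with h | h
    · exact absurd h h2n
    · exact h
  rw [FullJoinAux.F_count] at hF
  show ((fullJoin t1 t2).filter fun r => xorSum r = 0).card
      = ((fullJoin t1 t2).filter fun r => xorSum r = 1).card
  have e : ∀ r : Fin (n+1) → ZMod 2, (∑ i ∈ Finset.univ, r i) = xorSum r := fun r => rfl
  simp only [e] at hF
  omega
end

section
/- The full join of tables respects deletion of a commonly-fixed column: if t1 and t2 are tables with n+1 columns in which column j is fixed with the same value b in both, and t1', t2' denote the tables obtained by deleting column j, then the full join t1 ⋈ t2 equals the table obtained from t1' ⋈ t2' by re-inserting the constant-b column at position j; moreover t1 ⋈ t2 is (1,0,n+1)-safe if and only if t1' ⋈ t2' is (1,0,n)-safe. -/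
lemma count_fullJoin {N : ℕ} (t1 t2 : Multiset (Fin N → ZMod 2)) (v : Fin N → ZMod 2) :
    (fullJoin t1 t2).count v = t1.count v * t2.count v := by
  unfold fullJoin
  rw [Multiset.count_sum']
  simp [Multiset.count_replicate]

lemma insertNth_injective {n : ℕ} (j : Fin (n + 1)) (b : ZMod 2) :
    Function.Injective (fun r : Fin n → ZMod 2 =>
      @Fin.insertNth n (fun _ => ZMod 2) j b r) := by
  intro r s h
  funext i
  have := congrFun h (j.succAbove i)
  simpa using this

lemma insertNth_deleteCol {n : ℕ} (j : Fin (n + 1)) (r : Fin (n + 1) → ZMod 2) :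
    @Fin.insertNth n (fun _ => ZMod 2) j (r j) (deleteCol j r) = r := by
  rw [Fin.insertNth_eq_iff]
  exact ⟨rfl, rfl⟩

lemma map_insert_delete {n : ℕ} (j : Fin (n + 1)) (b : ZMod 2)
    (t : Multiset (Fin (n + 1) → ZMod 2)) (h : ∀ r ∈ t, r j = b) :
    (t.map (deleteCol j)).map (fun r => j.insertNth b r) = t := by
  rw [Multiset.map_map]
  rw [Multiset.map_congr rfl (fun r hr => by
    show j.insertNth b (deleteCol j r) = id r
    rw [← h r hr]; exact insertNth_deleteCol j r)]
  simp

/-- the full join respects deletion of a commonly-fixed column,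
and base safety is preserved by this deletion. -/
theorem fullJoin_delete_fixed_column (n : ℕ)
    (t1 t2 : Multiset (Fin (n + 1) → ZMod 2)) (j : Fin (n + 1)) (b : ZMod 2)
    (h1 : ∀ r ∈ t1, r j = b) (h2 : ∀ r ∈ t2, r j = b) :
    fullJoin t1 t2 =
      (fullJoin (t1.map (deleteCol j)) (t2.map (deleteCol j))).map
        (fun r => j.insertNth b r) ∧
    (safeB 0 (fullJoin t1 t2) ↔
      safeB 0 (fullJoin (t1.map (deleteCol j)) (t2.map (deleteCol j)))) := by
  have key : fullJoin t1 t2 =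
      (fullJoin (t1.map (deleteCol j)) (t2.map (deleteCol j))).map
        (fun r => j.insertNth b r) := by
    ext v
    rw [count_fullJoin]
    by_cases hv : v j = b
    · have hveq : v = j.insertNth b (deleteCol j v) := by
        rw [← hv]; exact (insertNth_deleteCol j v).symm
      rw [hveq, Multiset.count_map_eq_count' _ _ (insertNth_injective j b),
        count_fullJoin]
      congr 1
      · conv_lhs => rw [← map_insert_delete j b t1 h1]
        rw [Multiset.count_map_eq_count' _ _ (insertNth_injective j b)]
      · conv_lhs => rw [← map_insert_delete j b t2 h2]
        rw [Multiset.count_map_eq_count' _ _ (insertNth_injective j b)]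
    · have c1 : t1.count v = 0 := by
        rw [Multiset.count_eq_zero]; intro hm; exact hv (h1 v hm)
      have c2 : (((fullJoin (t1.map (deleteCol j)) (t2.map (deleteCol j))).map
          (fun r => j.insertNth b r)).count v) = 0 := by
        rw [Multiset.count_eq_zero]
        intro hm
        rcases Multiset.mem_map.mp hm with ⟨r, _, rfl⟩
        exact hv (by simp)
      rw [c1, c2, zero_mul]
  refine ⟨key, ?_⟩
  have hxor : ∀ r : Fin n → ZMod 2, xorSum (j.insertNth b r) = b + xorSum r := by
    intro r
    unfold xorSum
    rw [Fin.sum_univ_succAbove _ j]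
    simp
  rw [key]
  set X := fullJoin (t1.map (deleteCol j)) (t2.map (deleteCol j)) with hX
  have hcard : ∀ c : ZMod 2,
      ((X.map (fun r => j.insertNth b r)).filter (fun r => xorSum r = c)).card
        = (X.filter (fun r => xorSum r = b + c)).card := by
    intro c
    rw [Multiset.filter_map, Multiset.card_map]
    congr 1
    apply Multiset.filter_congr
    intro r _
    simp only [Function.comp_apply, hxor r]
    constructor
    · intro h; rw [← h, ← add_assoc]; simp [CharTwo.add_self_eq_zero]
    · intro h; rw [h, ← add_assoc]; simp [CharTwo.add_self_eq_zero]
  show ((X.map _).filter _).card = ((X.map _).filter _).card ↔ _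
  rw [hcard 0, hcard 1]
  unfold safeB
  have hb : ∀ x : ZMod 2, x = 0 ∨ x = 1 := by decide
  rcases hb b with rfl | rfl
  · norm_num
  · have h10 : (1 : ZMod 2) + 0 = 1 := rfl
    have h11 : (1 : ZMod 2) + 1 = 0 := rfl
    rw [h10, h11]
    exact eq_comm
end

section
/- Main composition counting theorem (sequential composition of tables): let n = m1 + m2 with m1, m2 > 0. Let t1 be a table whose last n+1 columns we call outputs, which is (x, n+1)-deterministic and (x, m1, n+1)-safe, and let t2 be a table whose first n+1 columns we call inputs, which is (1, n+1)-deterministic and (1, m2, n+1)-safe. Then the join t1 ⋈_{n+1} t2 (matching t1's last n+1 columns with t2's first n+1 columns) is (x, 0, n+1)-safe: for all secret vectors b, b' ∈ {0,1}^x, the numbers of rows of the joined table whose first x blocks of n+1 entries XOR-sum to b and to b' respectively are equal. -/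
namespace SeqCompAux

open Finset

def sgn (a : ZMod 2) : ℤ := if a = 0 then 1 else -1

lemma sgn_mul_self (a : ZMod 2) : sgn a * sgn a = 1 := by revert a; decide

lemma sgn_mul_ne {a b : ZMod 2} (h : a ≠ b) : sgn a * sgn b = -1 := by revert a b; decide

lemma sgn_add (a b : ZMod 2) : sgn (a + b) = sgn a * sgn b := by revert a b; decide

lemma zmod2_em (a : ZMod 2) : (¬ a = 0) ↔ a = 1 := by revert a; decide

lemma sgn_sum {k : ℕ} (S : Finset (Fin k)) (f : Fin k → ZMod 2) :
    sgn (∑ j ∈ S, f j) = ∏ j ∈ S, sgn (f j) := by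
  classical
  induction S using Finset.induction_on with
  | empty => simp [sgn]
  | insert _ _ h ih =>
      rw [Finset.sum_insert h, Finset.prod_insert h, sgn_add, ih]

/-- orthogonality -/
lemma orth {k : ℕ} (w w' : Fin k → ZMod 2) :
    ∑ S ∈ (Finset.univ : Finset (Fin k)).powerset,
      (∏ j ∈ S, sgn (w j)) * (∏ j ∈ S, sgn (w' j))
      = if w = w' then (2 ^ k : ℤ) else 0 := by
  classical
  have h1 : ∀ S ∈ (Finset.univ : Finset (Fin k)).powerset,
      (∏ j ∈ S, sgn (w j)) * (∏ j ∈ S, sgn (w' j))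
        = (∏ j ∈ S, sgn (w j) * sgn (w' j)) * ∏ j ∈ Finset.univ \ S, (1:ℤ) := by
    intro S _
    rw [Finset.prod_mul_distrib]; simp
  rw [Finset.sum_congr rfl h1, ← Finset.prod_add]
  by_cases h : w = w'
  · subst h
    rw [if_pos rfl]
    have h2 : ∀ j ∈ (Finset.univ : Finset (Fin k)), sgn (w j) * sgn (w j) + 1 = 2 := by
      intro j _; rw [sgn_mul_self]; norm_num
    rw [Finset.prod_congr rfl h2, Finset.prod_const, Finset.card_univ, Fintype.card_fin]
  · rw [if_neg h]
    obtain ⟨j, hj⟩ := Function.ne_iff.mp h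
    exact Finset.prod_eq_zero (Finset.mem_univ j) (by rw [sgn_mul_ne hj]; ring)

end SeqCompAux
namespace SeqCompAux

lemma card_eq_sum_count {α : Type*} [Fintype α] [DecidableEq α] (t : Multiset α) :
    t.card = ∑ u : α, t.count u := by
  rw [← Multiset.toFinset_sum_count_eq]
  exact Finset.sum_subset (Finset.subset_univ _)
    (by intro u _ hu; simpa [Multiset.count_eq_zero] using hu)

lemma card_filter_eq_sum_count {α : Type*} [Fintype α] [DecidableEq α]
    (t : Multiset α) (p : α → Prop) [DecidablePred p] :
    (t.filter p).card = ∑ u : α, if p u then t.count u else 0 := by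
  rw [card_eq_sum_count]
  exact Finset.sum_congr rfl fun u _ => Multiset.count_filter

lemma card_filter_finsum {α : Type*} [DecidableEq α] [Fintype α]
    (p : α → Prop) [DecidablePred p] (g : α → ℕ) :
    ((∑ w : α, Multiset.replicate (g w) w).filter p).card
      = ∑ w : α, if p w then g w else 0 := by
  classical
  let F : Multiset α →+ ℕ :=
    { toFun := fun t => (t.filter p).card
      map_zero' := by simp
      map_add' := by intro a b; simp [Multiset.filter_add] }
  have hF : ∀ t, F t = (t.filter p).card := fun _ => rfl
  rw [← hF, map_sum]
  refine Finset.sum_congr rfl fun w _ => ?_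
  rw [hF]
  by_cases h : p w
  · rw [if_pos h, Multiset.filter_eq_self.mpr, Multiset.card_replicate]
    intro a ha
    rwa [Multiset.eq_of_mem_replicate ha]
  · rw [if_neg h, Multiset.filter_eq_nil.mpr, Multiset.card_zero]
    intro a ha
    rwa [Multiset.eq_of_mem_replicate ha]

lemma map_sum_eq_sum_filter {α β : Type*} [Fintype β] [DecidableEq β]
    (t : Multiset α) (proj : α → β) (φ : β → ℤ) :
    (t.map (fun r => φ (proj r))).sum
      = ∑ w : β, φ w * ((t.filter (fun r => proj r = w)).card : ℤ) := by
  classical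
  induction t using Multiset.induction_on with
  | empty => simp
  | cons r t ih =>
      simp only [Multiset.map_cons, Multiset.sum_cons, ih, Multiset.filter_cons]
      have h1 : ∀ w ∈ (Finset.univ : Finset β),
          φ w * ((Multiset.card ((if proj r = w then {r} else 0)
              + Multiset.filter (fun r => proj r = w) t)) : ℤ)
            = (if proj r = w then φ w else 0)
              + φ w * (Multiset.card (Multiset.filter (fun r => proj r = w) t) : ℤ) := by
        intro w _
        by_cases h : proj r = w <;> simp [h] <;> ring
      rw [Finset.sum_congr rfl h1, Finset.sum_add_distrib, Finset.sum_ite_eq Finset.univ (proj r) φ]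
      simp

end SeqCompAux
namespace SeqCompAux

lemma split2 {α : Type*} (t : Multiset α) (f : α → ZMod 2) :
    t.filter (fun r => f r = 0) + t.filter (fun r => f r = 1) = t := by
  classical
  have h : t.filter (fun r => f r = 1) = t.filter (fun r => ¬ f r = 0) :=
    Multiset.filter_congr (fun r _ => (zmod2_em (f r)).symm)
  rw [h, Multiset.filter_add_not]

lemma reduce_split {N : ℕ} (t : Multiset (Fin N → ZMod 2)) (j : Fin N) :
    reduce j 0 t + reduce j 1 t = t :=
  split2 t (fun r => r j)

lemma restrict_add {N x ℓ : ℕ} (hN : x * ℓ ≤ N) (b : Fin x → ZMod 2)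
    (s t : Multiset (Fin N → ZMod 2)) :
    restrict hN b (s + t) = restrict hN b s + restrict hN b t :=
  Multiset.filter_add _ s t

lemma mem_reduce {N : ℕ} {j : Fin N} {c : ZMod 2} {t : Multiset (Fin N → ZMod 2)}
    {r : Fin N → ZMod 2} (h : r ∈ reduce j c t) : r j = c :=
  (Multiset.mem_filter.mp h).2

lemma mem_restrict {N x ℓ : ℕ} {hN : x * ℓ ≤ N} {b : Fin x → ZMod 2}
    {t : Multiset (Fin N → ZMod 2)} {r : Fin N → ZMod 2}
    (h : r ∈ restrict hN b t) : r ∈ t :=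
  Multiset.mem_of_mem_filter h

lemma prod_factor {N k : ℕ} (S : Finset (Fin k)) (ι : Fin k → Fin N) (j : Fin k)
    (hj : j ∈ S) (c : ZMod 2) (t : Multiset (Fin N → ZMod 2))
    (h : ∀ r ∈ t, r (ι j) = c) :
    ((t.map (fun r => ∏ i ∈ S, sgn (r (ι i)))).sum : ℤ)
      = sgn c * (t.map (fun r => ∏ i ∈ S.erase j, sgn (r (ι i)))).sum := by
  rw [← Multiset.sum_map_mul_left]
  refine congrArg Multiset.sum (Multiset.map_congr rfl ?_)
  intro r hr
  rw [← Finset.mul_prod_erase S _ hj, h r hr]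

lemma sum_map_const_one {α : Type*} (t : Multiset α) :
    (t.map (fun _ => (1 : ℤ))).sum = t.card := by
  simp

/-- L1: after at most `m` reductions from an `(x,m,ℓ)`-safe table, signed sums of
restrictions are independent of the secret. -/
lemma L1 {N x ℓ k : ℕ} (hN : x * ℓ ≤ N) (j0 : Fin N) (ι : Fin k → Fin N) :
    ∀ (m : ℕ) (t : Multiset (Fin N → ZMod 2)), safe hN m t →
      ∀ (S : Finset (Fin k)), S.card ≤ m → ∀ b b' : Fin x → ZMod 2,
      (((restrict hN b t).map (fun r => ∏ j ∈ S, sgn (r (ι j)))).sum : ℤ)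
        = ((restrict hN b' t).map (fun r => ∏ j ∈ S, sgn (r (ι j)))).sum := by
  intro m
  induction m with
  | zero =>
      intro t hs S hS b b'
      have hS0 : S = ∅ := Finset.card_eq_zero.mp (Nat.le_zero.mp hS)
      subst hS0
      simp only [Finset.prod_empty, sum_map_const_one]
      exact_mod_cast hs b b'
  | succ m ih =>
      intro t hs S hS b b'
      by_cases h : S.card ≤ m
      · rw [← reduce_split t j0, restrict_add, restrict_add,
          Multiset.map_add, Multiset.map_add, Multiset.sum_add, Multiset.sum_add,
          ih _ (hs j0 0) S h b b', ih _ (hs j0 1) S h b b']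
      · have hcard : 0 < S.card := by omega
        obtain ⟨j, hj⟩ := Finset.card_pos.mp hcard
        have hec : (S.erase j).card ≤ m := by
          rw [Finset.card_erase_of_mem hj]; omega
        have hmem : ∀ (c : ZMod 2) (bb : Fin x → ZMod 2) r,
            r ∈ restrict hN bb (reduce (ι j) c t) → r (ι j) = c :=
          fun c bb r hr => mem_reduce (mem_restrict hr)
        rw [← reduce_split t (ι j), restrict_add, restrict_add,
          Multiset.map_add, Multiset.map_add, Multiset.sum_add, Multiset.sum_add,
          prod_factor S ι j hj 0 _ (hmem 0 b), prod_factor S ι j hj 1 _ (hmem 1 b),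
          prod_factor S ι j hj 0 _ (hmem 0 b'), prod_factor S ι j hj 1 _ (hmem 1 b'),
          ih _ (hs (ι j) 0) (S.erase j) hec b b', ih _ (hs (ι j) 1) (S.erase j) hec b b']

end SeqCompAux
namespace SeqCompAux

lemma prod_factor_insert {N k : ℕ} (S : Finset (Fin k)) (ι : Fin k → Fin N) (j : Fin k)
    (hj : j ∉ S) (c : ZMod 2) (t : Multiset (Fin N → ZMod 2))
    (h : ∀ r ∈ t, r (ι j) = c) :
    ((t.map (fun r => ∏ i ∈ S, sgn (r (ι i)))).sum : ℤ)
      = sgn c * (t.map (fun r => ∏ i ∈ insert j S, sgn (r (ι i)))).sum := by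
  have h2 := prod_factor (insert j S) ι j (Finset.mem_insert_self j S) c t h
  rw [Finset.erase_insert hj] at h2
  rw [h2, ← mul_assoc, sgn_mul_self, one_mul]

/-- L2: signed sums over at least `ℓ - m` input columns of a `(1,m,ℓ)`-safe table vanish. -/
lemma L2 {N ℓ : ℕ} (hℓ : 0 < ℓ) (h1 : 1 * ℓ ≤ N) :
    ∀ (m : ℕ) (t : Multiset (Fin N → ZMod 2)), safe h1 m t →
      ∀ S : Finset (Fin ℓ), ℓ ≤ S.card + m →
      ((t.map (fun r => ∏ j ∈ S, sgn (r (blockIdx h1 0 j)))).sum : ℤ) = 0 := by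
  intro m
  induction m with
  | zero =>
      intro t hs S hS
      have hSu : S = Finset.univ := by
        apply Finset.eq_univ_of_card
        have := Finset.card_le_univ S
        simp only [Finset.card_univ, Fintype.card_fin] at *
        omega
      subst hSu
      have hps : ∀ r : Fin N → ZMod 2,
          (∏ j ∈ Finset.univ, sgn (r (blockIdx h1 0 j))) = sgn (blockSum h1 0 r) := by
        intro r
        rw [blockSum, sgn_sum]
      have hmc : (t.map (fun r => ∏ j ∈ Finset.univ, sgn (r (blockIdx h1 0 j))))
          = t.map (fun r => sgn (blockSum h1 0 r)) :=
        Multiset.map_congr rfl (fun r _ => hps r)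
      rw [hmc]
      -- split t by value of blockSum
      rw [← split2 t (fun r => blockSum h1 0 r), Multiset.map_add, Multiset.sum_add]
      have e0 : ((t.filter (fun r => blockSum h1 0 r = 0)).map
          (fun r => sgn (blockSum h1 0 r))).sum
            = ((t.filter (fun r => blockSum h1 0 r = 0)).card : ℤ) := by
        rw [show (t.filter (fun r => blockSum h1 0 r = 0)).map
              (fun r => sgn (blockSum h1 0 r))
            = (t.filter (fun r => blockSum h1 0 r = 0)).map (fun _ => (1:ℤ)) from
          Multiset.map_congr rfl (fun r hr => by
            rw [(Multiset.mem_filter.mp hr).2]; rfl), sum_map_const_one]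
      have e1 : ((t.filter (fun r => blockSum h1 0 r = 1)).map
          (fun r => sgn (blockSum h1 0 r))).sum
            = -((t.filter (fun r => blockSum h1 0 r = 1)).card : ℤ) := by
        rw [show (t.filter (fun r => blockSum h1 0 r = 1)).map
              (fun r => sgn (blockSum h1 0 r))
            = (t.filter (fun r => blockSum h1 0 r = 1)).map (fun _ => (-1:ℤ)) from
          Multiset.map_congr rfl (fun r hr => by
            rw [(Multiset.mem_filter.mp hr).2]; rfl)]
        simp
      rw [e0, e1]
      have hcards : (t.filter (fun r => blockSum h1 0 r = 0)).card
          = (t.filter (fun r => blockSum h1 0 r = 1)).card := by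
        have hc := hs (fun _ => 0) (fun _ => 1)
        have hr0 : restrict h1 (fun _ => (0:ZMod 2)) t
            = t.filter (fun r => blockSum h1 0 r = 0) := by
          refine Multiset.filter_congr (fun r _ => ?_)
          constructor
          · intro h; exact h 0
          · intro h i; rw [Subsingleton.elim i 0]; exact h
        have hr1 : restrict h1 (fun _ => (1:ZMod 2)) t
            = t.filter (fun r => blockSum h1 0 r = 1) := by
          refine Multiset.filter_congr (fun r _ => ?_)
          constructor
          · intro h; exact h 0
          · intro h i; rw [Subsingleton.elim i 0]; exact h
        rw [hr0, hr1] at hc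
        exact hc
      rw [hcards]; ring
  | succ m ih =>
      intro t hs S hS
      by_cases huniv : S = Finset.univ
      · subst huniv
        have hc : ℓ ≤ (Finset.univ : Finset (Fin ℓ)).card + m := by
          simp only [Finset.card_univ, Fintype.card_fin]; omega
        set j0 := blockIdx h1 0 ⟨0, hℓ⟩
        rw [← reduce_split t j0, Multiset.map_add, Multiset.sum_add,
          ih _ (hs j0 0) _ hc, ih _ (hs j0 1) _ hc, add_zero]
      · obtain ⟨j, hj⟩ : ∃ j, j ∉ S := by
          by_contra hcon
          push_neg at hcon
          exact huniv (Finset.eq_univ_iff_forall.mpr hcon)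
        have hic : ℓ ≤ (insert j S).card + m := by
          rw [Finset.card_insert_of_notMem hj]; omega
        have hmem : ∀ (c : ZMod 2) r, r ∈ reduce (blockIdx h1 0 j) c t
            → r (blockIdx h1 0 j) = c :=
          fun c r hr => (Multiset.mem_filter.mp hr).2
        rw [← reduce_split t (blockIdx h1 0 j), Multiset.map_add, Multiset.sum_add,
          prod_factor_insert S _ j hj 0 _ (hmem 0),
          prod_factor_insert S _ j hj 1 _ (hmem 1),
          ih _ (hs (blockIdx h1 0 j) 0) _ hic,
          ih _ (hs (blockIdx h1 0 j) 1) _ hic]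
        ring

end SeqCompAux
namespace SeqCompAux

lemma fourier {k : ℕ} (A B : (Fin k → ZMod 2) → ℤ) :
    ∑ S ∈ (Finset.univ : Finset (Fin k)).powerset,
      (∑ w : Fin k → ZMod 2, (∏ j ∈ S, sgn (w j)) * A w)
        * (∑ w : Fin k → ZMod 2, (∏ j ∈ S, sgn (w j)) * B w)
      = 2 ^ k * ∑ w : Fin k → ZMod 2, A w * B w := by
  classical
  have h1 : ∀ S ∈ (Finset.univ : Finset (Fin k)).powerset,
      (∑ w : Fin k → ZMod 2, (∏ j ∈ S, sgn (w j)) * A w)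
        * (∑ w : Fin k → ZMod 2, (∏ j ∈ S, sgn (w j)) * B w)
      = ∑ w : Fin k → ZMod 2, ∑ w' : Fin k → ZMod 2,
          ((∏ j ∈ S, sgn (w j)) * A w) * ((∏ j ∈ S, sgn (w' j)) * B w') := by
    intro S _
    rw [Finset.sum_mul_sum]
  rw [Finset.sum_congr rfl h1, Finset.sum_comm]
  have h2 : ∀ w ∈ (Finset.univ : Finset (Fin k → ZMod 2)),
      (∑ S ∈ (Finset.univ : Finset (Fin k)).powerset, ∑ w' : Fin k → ZMod 2,
        ((∏ j ∈ S, sgn (w j)) * A w) * ((∏ j ∈ S, sgn (w' j)) * B w'))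
      = A w * B w * 2 ^ k := by
    intro w _
    rw [Finset.sum_comm]
    have h3 : ∀ w' ∈ (Finset.univ : Finset (Fin k → ZMod 2)),
        (∑ S ∈ (Finset.univ : Finset (Fin k)).powerset,
          ((∏ j ∈ S, sgn (w j)) * A w) * ((∏ j ∈ S, sgn (w' j)) * B w'))
        = (A w * B w') * (if w = w' then (2^k : ℤ) else 0) := by
      intro w' _
      rw [← orth w w', Finset.mul_sum]
      exact Finset.sum_congr rfl (fun S _ => by ring)
    rw [Finset.sum_congr rfl h3]
    have h4 : ∀ w' ∈ (Finset.univ : Finset (Fin k → ZMod 2)),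
        (A w * B w') * (if w = w' then (2^k : ℤ) else 0)
        = if w = w' then A w * B w' * 2^k else 0 := by
      intro w' _
      by_cases h : w = w' <;> simp [h]
    rw [Finset.sum_congr rfl h4, Finset.sum_ite_eq]
    simp
  rw [Finset.sum_congr rfl h2, ← Finset.sum_mul]
  ring

end SeqCompAux
namespace SeqCompAux

def proj1 {N1 N2 L : ℕ} (h2 : L ≤ N2) (v : Fin (N1 + N2 - L) → ZMod 2) :
    Fin N1 → ZMod 2 :=
  fun i => v ⟨i.1, by have := i.2; omega⟩

def proj2 {N1 N2 L : ℕ} (h1 : L ≤ N1) (v : Fin (N1 + N2 - L) → ZMod 2) :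
    Fin N2 → ZMod 2 :=
  fun i => v ⟨N1 - L + i.1, by have := i.2; omega⟩

def glue {N1 N2 L : ℕ} (h1 : L ≤ N1)
    (u1 : Fin N1 → ZMod 2) (u2 : Fin N2 → ZMod 2) : Fin (N1 + N2 - L) → ZMod 2 :=
  fun k => if h : k.1 < N1 then u1 ⟨k.1, h⟩
    else u2 ⟨k.1 - (N1 - L), by have := k.2; omega⟩

lemma join_restrict_card {x n N1 N2 : ℕ}
    (hN1 : x * (n+1) ≤ N1) (hout1 : n+1 ≤ N1) (hN2 : n+1 ≤ N2)
    (hJ : x * (n+1) ≤ N1 + N2 - (n+1)) (h2 : 1 * (n+1) ≤ N2)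
    (t1 : Multiset (Fin N1 → ZMod 2)) (t2 : Multiset (Fin N2 → ZMod 2))
    (b : Fin x → ZMod 2) :
    (restrict hJ b (join hout1 hN2 t1 t2)).card
      = ∑ w : Fin (n+1) → ZMod 2,
          ((restrict hN1 b t1).filter (fun r => lastProj hout1 r = w)).card
            * (t2.filter (fun r => (fun j => r (blockIdx h2 0 j)) = w)).card := by
  classical
  have step1 : (restrict hJ b (join hout1 hN2 t1 t2)).card
      = ∑ v : Fin (N1 + N2 - (n+1)) → ZMod 2,
          if (∀ i, blockSum hJ i v = b i)
          then t1.count (proj1 hN2 v) * t2.count (proj2 hout1 v) else 0 :=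
    card_filter_finsum _ _
  rw [step1]
  -- bijection onto matching pairs
  have step2 : (∑ v : Fin (N1 + N2 - (n+1)) → ZMod 2,
        if (∀ i, blockSum hJ i v = b i)
        then t1.count (proj1 hN2 v) * t2.count (proj2 hout1 v) else 0)
      = ∑ q ∈ (Finset.univ ×ˢ Finset.univ :
            Finset ((Fin N1 → ZMod 2) × (Fin N2 → ZMod 2))).filter
            (fun q => lastProj hout1 q.1 = fun j => q.2 (blockIdx h2 0 j)),
          if (∀ i, blockSum hN1 i q.1 = b i)
          then t1.count q.1 * t2.count q.2 else 0 := by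
    refine Finset.sum_nbij' (fun v => (proj1 hN2 v, proj2 hout1 v))
      (fun q => glue hout1 q.1 q.2) ?_ ?_ ?_ ?_ ?_
    · intro v _
      refine Finset.mem_filter.mpr ⟨Finset.mem_product.mpr ⟨Finset.mem_univ _,
        Finset.mem_univ _⟩, ?_⟩
      funext j
      show proj1 hN2 v _ = proj2 hout1 v _
      simp only [proj1, proj2, lastProj, blockIdx]
      exact congrArg v (Fin.ext (by simp))
    · intro q _; exact Finset.mem_univ _
    · intro v _
      funext k
      show glue hout1 (proj1 hN2 v) (proj2 hout1 v) k = v k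
      simp only [glue, proj1, proj2]
      by_cases h : k.1 < N1
      · rw [dif_pos h]
      · rw [dif_neg h]
        exact congrArg v (Fin.ext (by simp; omega))
    · intro q hq
      obtain ⟨-, hmatch⟩ := Finset.mem_filter.mp hq
      have e1 : proj1 hN2 (glue hout1 q.1 q.2) = q.1 := by
        funext i
        show glue hout1 q.1 q.2 _ = q.1 i
        simp only [glue]
        rw [dif_pos i.2]
      have e2 : proj2 hout1 (glue hout1 q.1 q.2) = q.2 := by
        funext i
        show glue hout1 q.1 q.2 _ = q.2 i
        simp only [glue]
        by_cases h : N1 - (n+1) + i.1 < N1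
        · rw [dif_pos h]
          have hi : i.1 < n + 1 := by omega
          have h3 := congrFun hmatch ⟨i.1, hi⟩
          simp only [lastProj, blockIdx] at h3
          have h4 : q.1 ⟨N1 - (n+1) + i.1, h⟩ = q.1 ⟨N1 - (n+1) + (⟨i.1, hi⟩ : Fin (n+1)).1, by omega⟩ := rfl
          rw [h4, h3]
          exact congrArg q.2 (Fin.ext (by simp))
        · rw [dif_neg h]
          exact congrArg q.2 (Fin.ext (by simp))
      exact Prod.ext e1 e2
    · intro v _
      exact if_congr Iff.rfl rfl rfl
  rw [step2, Finset.sum_filter, Finset.sum_product]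
  -- collapse the second table
  have step5 : ∀ u1 : Fin N1 → ZMod 2,
      (∑ u2 : Fin N2 → ZMod 2,
        if (lastProj hout1 u1 = fun j => u2 (blockIdx h2 0 j))
        then (if (∀ i, blockSum hN1 i u1 = b i)
          then t1.count u1 * t2.count u2 else 0) else 0)
      = if (∀ i, blockSum hN1 i u1 = b i)
        then t1.count u1
          * (t2.filter (fun r => (fun j => r (blockIdx h2 0 j))
              = lastProj hout1 u1)).card else 0 := by
    intro u1
    by_cases hp : (∀ i, blockSum hN1 i u1 = b i)
    · simp only [if_pos hp]
      rw [card_filter_eq_sum_count, Finset.mul_sum]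
      refine Finset.sum_congr rfl (fun u2 _ => ?_)
      by_cases h : (fun j => u2 (blockIdx h2 0 j)) = lastProj hout1 u1
      · rw [if_pos h, if_pos h.symm]
      · rw [if_neg h, if_neg (fun hc => h hc.symm), mul_zero]
    · simp only [if_neg hp]
      simp
  have step5' : (∑ u1 : Fin N1 → ZMod 2, ∑ u2 : Fin N2 → ZMod 2,
        if (lastProj hout1 u1 = fun j => u2 (blockIdx h2 0 j))
        then (if (∀ i, blockSum hN1 i u1 = b i)
          then t1.count u1 * t2.count u2 else 0) else 0)
      = ∑ u1 : Fin N1 → ZMod 2,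
          if (∀ i, blockSum hN1 i u1 = b i)
          then t1.count u1
            * (t2.filter (fun r => (fun j => r (blockIdx h2 0 j))
                = lastProj hout1 u1)).card else 0 :=
    Finset.sum_congr rfl (fun u1 _ => step5 u1)
  rw [step5']
  -- regroup by the overlap value
  have step6 : ∀ u1 : Fin N1 → ZMod 2,
      (if (∀ i, blockSum hN1 i u1 = b i)
        then t1.count u1
          * (t2.filter (fun r => (fun j => r (blockIdx h2 0 j))
              = lastProj hout1 u1)).card else 0)
      = ∑ w : Fin (n+1) → ZMod 2,
          if ((∀ i, blockSum hN1 i u1 = b i) ∧ lastProj hout1 u1 = w)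
          then t1.count u1
            * (t2.filter (fun r => (fun j => r (blockIdx h2 0 j)) = w)).card
          else 0 := by
    intro u1
    by_cases hp : (∀ i, blockSum hN1 i u1 = b i)
    · rw [if_pos hp,
        Finset.sum_congr rfl (fun w _ => if_congr (and_iff_right hp) rfl rfl),
        Finset.sum_ite_eq (Finset.univ) (lastProj hout1 u1)
        (fun w => t1.count u1
          * (t2.filter (fun r => (fun j => r (blockIdx h2 0 j)) = w)).card)]
      simp
    · rw [if_neg hp]
      exact (Finset.sum_eq_zero (fun w _ => if_neg (fun hc => hp hc.1))).symm
  rw [Finset.sum_congr rfl (fun u1 _ => step6 u1), Finset.sum_comm]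
  refine Finset.sum_congr rfl (fun w _ => ?_)
  -- identify the first factor as a filtered card
  have hA : ((restrict hN1 b t1).filter (fun r => lastProj hout1 r = w)).card
      = ∑ u1 : Fin N1 → ZMod 2,
          if ((∀ i, blockSum hN1 i u1 = b i) ∧ lastProj hout1 u1 = w)
          then t1.count u1 else 0 := by
    show ((t1.filter _).filter _).card = _
    rw [Multiset.filter_filter, card_filter_eq_sum_count]
    refine Finset.sum_congr rfl (fun u1 _ => ?_)
    exact if_congr and_comm rfl rfl
  rw [hA, Finset.sum_mul]
  refine Finset.sum_congr rfl (fun u1 _ => ?_)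
  by_cases h : ((∀ i, blockSum hN1 i u1 = b i) ∧ lastProj hout1 u1 = w)
  · rw [if_pos h, if_pos h]
  · rw [if_neg h, if_neg h, zero_mul]

end SeqCompAux
namespace SeqCompAux

lemma main_aux {x n m1 m2 N1 N2 : ℕ} (hm1 : 0 < m1) (hm2 : 0 < m2) (hn : n = m1 + m2)
    (hN1 : x * (n + 1) ≤ N1) (hout1 : n + 1 ≤ N1) (hN2 : n + 1 ≤ N2)
    (h2 : 1 * (n + 1) ≤ N2) (hJ : x * (n + 1) ≤ N1 + N2 - (n + 1))
    (t1 : Multiset (Fin N1 → ZMod 2)) (t2 : Multiset (Fin N2 → ZMod 2))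
    (hsafe1 : safe hN1 m1 t1) (hsafe2 : safe h2 m2 t2)
    (b b' : Fin x → ZMod 2) :
    (restrict hJ b (join hout1 hN2 t1 t2)).card
      = (restrict hJ b' (join hout1 hN2 t1 t2)).card := by
  classical
  set A : (Fin x → ZMod 2) → (Fin (n+1) → ZMod 2) → ℤ := fun c w =>
    (((restrict hN1 c t1).filter (fun r => lastProj hout1 r = w)).card : ℤ) with hAdef
  set B : (Fin (n+1) → ZMod 2) → ℤ := fun w =>
    ((t2.filter (fun r => (fun j => r (blockIdx h2 0 j)) = w)).card : ℤ) with hBdef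
  have hcount : ∀ c : Fin x → ZMod 2,
      ((restrict hJ c (join hout1 hN2 t1 t2)).card : ℤ)
        = ∑ w : Fin (n+1) → ZMod 2, A c w * B w := by
    intro c
    rw [join_restrict_card hN1 hout1 hN2 hJ h2 t1 t2 c]
    push_cast
    rfl
  have hAhat : ∀ S : Finset (Fin (n+1)), S.card ≤ m1 →
      (∑ w : Fin (n+1) → ZMod 2, (∏ j ∈ S, sgn (w j)) * A b w)
        = ∑ w : Fin (n+1) → ZMod 2, (∏ j ∈ S, sgn (w j)) * A b' w := by
    intro S hS
    let ι : Fin (n+1) → Fin N1 := fun j => ⟨N1 - (n+1) + j.1, by have := j.2; omega⟩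
    let j0 : Fin N1 := ⟨0, by omega⟩
    have e : ∀ c : Fin x → ZMod 2,
        (((restrict hN1 c t1).map (fun r => ∏ j ∈ S, sgn (r (ι j)))).sum : ℤ)
          = ∑ w : Fin (n+1) → ZMod 2, (∏ j ∈ S, sgn (w j)) * A c w :=
      fun c => map_sum_eq_sum_filter (restrict hN1 c t1) (lastProj hout1)
        (fun w => ∏ j ∈ S, sgn (w j))
    rw [← e b, ← e b']
    exact L1 hN1 j0 ι m1 t1 hsafe1 S hS b b'
  have hBhat : ∀ S : Finset (Fin (n+1)), m1 < S.card →
      (∑ w : Fin (n+1) → ZMod 2, (∏ j ∈ S, sgn (w j)) * B w) = 0 := by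
    intro S hS
    have hcard : n + 1 ≤ S.card + m2 := by omega
    have e : ((t2.map (fun r => ∏ j ∈ S, sgn (r (blockIdx h2 0 j)))).sum : ℤ)
        = ∑ w : Fin (n+1) → ZMod 2, (∏ j ∈ S, sgn (w j)) * B w :=
      map_sum_eq_sum_filter t2 (fun r => (fun j => r (blockIdx h2 0 j)))
        (fun w => ∏ j ∈ S, sgn (w j))
    rw [← e]
    exact L2 (Nat.succ_pos n) h2 m2 t2 hsafe2 S hcard
  have hmain : (2^(n+1) : ℤ) * ∑ w : Fin (n+1) → ZMod 2, A b w * B w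
      = 2^(n+1) * ∑ w : Fin (n+1) → ZMod 2, A b' w * B w := by
    rw [← fourier (A b) B, ← fourier (A b') B]
    refine Finset.sum_congr rfl (fun S _ => ?_)
    by_cases hS : S.card ≤ m1
    · rw [hAhat S hS]
    · rw [hBhat S (by omega), mul_zero, mul_zero]
  have hsum : (∑ w : Fin (n+1) → ZMod 2, A b w * B w)
      = ∑ w : Fin (n+1) → ZMod 2, A b' w * B w :=
    mul_left_cancel₀ (by positivity) hmain
  have := (hcount b).trans (hsum.trans (hcount b').symm)
  exact_mod_cast this

end SeqCompAux
/-- main sequential-composition counting theorem. If t1 (with x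
secret blocks of size n+1 and last n+1 output columns) is deterministic and
(x,m1,n+1)-safe, and t2 (whose first n+1 columns are its input) is deterministic
and (1,m2,n+1)-safe, with n = m1 + m2, m1, m2 > 0, then their join matching t1's
outputs with t2's inputs is (x,0,n+1)-safe. -/
theorem sequential_composition_safe
    {x n m1 m2 N1 N2 : ℕ} (hm1 : 0 < m1) (hm2 : 0 < m2) (hn : n = m1 + m2)
    (hN1 : x * (n + 1) ≤ N1) (hout1 : n + 1 ≤ N1) (hN2 : n + 1 ≤ N2)
    (t1 : Multiset (Fin N1 → ZMod 2)) (t2 : Multiset (Fin N2 → ZMod 2))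
    (f : (Fin x → ZMod 2) → ZMod 2)
    (hdet1 : ∀ r ∈ t1, lastSum hout1 r = f (fun i => blockSum hN1 i r))
    (g : ZMod 2 → ZMod 2)
    (hdet2 : ∀ r ∈ t2, lastSum hN2 r =
      g (blockSum (show 1 * (n + 1) ≤ N2 by omega) (0 : Fin 1) r))
    (hsafe1 : safe hN1 m1 t1)
    (hsafe2 : safe (show 1 * (n + 1) ≤ N2 by omega) m2 t2) :
    safe (show x * (n + 1) ≤ N1 + N2 - (n + 1) from
        le_trans hN1 (by omega)) 0 (join hout1 hN2 t1 t2) := by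
  intro b b'
  exact SeqCompAux.main_aux hm1 hm2 hn hN1 hout1 hN2
    (show 1 * (n + 1) ≤ N2 by omega)
    (le_trans hN1 (by omega)) t1 t2 hsafe1 hsafe2 b b'
end

section
/- Tightness of sequential composition (counterexample): let n ≥ 1 and let t be the (n+1)-column table containing each vector of {0,1}^{n+1} exactly once (the identity-gadget table, which is (1,n,n+1)-safe). Then the join t ⋈ t matching all n+1 columns (i.e., the 'diagonal' table containing each v ∈ {0,1}^{n+1} exactly once, viewed with both component copies identified) is NOT safe against n+1 observations split as m on the first copy and n+1−m on the second copy with complementary column index sets: formally, there exists a sequence of n+1 reductions applied to t ⋈ t (equivalently to t, since the join on all columns of t with itself equals t) such that the resulting table fails (1,0,n+1)-safety. Concretely, reducing t at all n+1 columns to bits b_1,…,b_{n+1} leaves the single row (b_1,…,b_{n+1}), whose counts of XOR-sum-0 and XOR-sum-1 rows differ; hence t is (1,n,n+1)-safe but not (1,n+1,n+1)-safe. -/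
lemma xorSum_flip {N : ℕ} (j : Fin N) (r : Fin N → ZMod 2) :
    xorSum (Function.update r j (r j + 1)) = xorSum r + 1 := by
  unfold xorSum
  have : ∀ i : Fin N, Function.update r j (r j + 1) i = r i + (if i = j then 1 else 0) := by
    intro i
    by_cases h : i = j
    · subst h; simp
    · simp [Function.update_of_ne h, h]
  rw [Finset.sum_congr rfl (fun i _ => this i), Finset.sum_add_distrib]
  simp

lemma flip_flip' {N : ℕ} (j : Fin N) (r : Fin N → ZMod 2) :
    Function.update (Function.update r j (r j + 1)) j
      (Function.update r j (r j + 1) j + 1) = r := by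
  simp only [Function.update_self]
  rw [Function.update_idem]
  have h2 : (1 : ZMod 2) + 1 = 0 := by decide
  rw [add_assoc, h2, add_zero, Function.update_eq_self]

lemma balanced_of_closed {N : ℕ} (p : (Fin N → ZMod 2) → Prop) [DecidablePred p] (j : Fin N)
    (hp : ∀ r, p r → p (Function.update r j (r j + 1))) :
    safeB 0 ((Finset.univ.filter p).val) := by
  show Multiset.card _ = Multiset.card _
  rw [← Finset.filter_val, ← Finset.filter_val, Finset.filter_filter, Finset.filter_filter,
    ← Finset.card_def, ← Finset.card_def]
  apply Finset.card_nbij' (i := fun r => Function.update r j (r j + 1))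
    (j := fun r => Function.update r j (r j + 1))
  · intro r hr
    simp only [Finset.mem_coe, Finset.mem_filter, Finset.mem_univ, true_and] at hr ⊢
    exact ⟨hp r hr.1, by rw [xorSum_flip, hr.2]; decide⟩
  · intro r hr
    simp only [Finset.mem_coe, Finset.mem_filter, Finset.mem_univ, true_and] at hr ⊢
    exact ⟨hp r hr.1, by rw [xorSum_flip, hr.2]; decide⟩
  · intro r _; exact flip_flip' j r
  · intro r _; exact flip_flip' j r

lemma safeB_zero_table {N : ℕ} : ∀ m : ℕ, safeB m (0 : Multiset (Fin N → ZMod 2))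
  | 0 => rfl
  | m + 1 => fun j c => by
      have : reduce j c (0 : Multiset (Fin N → ZMod 2)) = 0 := rfl
      rw [this]; exact safeB_zero_table m

lemma reduce_filter_val {N : ℕ} (j : Fin N) (c : ZMod 2)
    (p : (Fin N → ZMod 2) → Prop) [DecidablePred p] :
    reduce j c ((Finset.univ.filter p).val)
      = (Finset.univ.filter (fun r => p r ∧ r j = c)).val := by
  show Multiset.filter _ _ = _
  rw [← Finset.filter_val, Finset.filter_filter]

lemma safe_filter {N : ℕ} : ∀ (m : ℕ) (S : Finset (Fin N)) (a : Fin N → ZMod 2),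
    S.card + m < N →
    safeB m ((Finset.univ.filter (fun r => ∀ i ∈ S, r i = a i)).val) := by
  intro m
  induction m with
  | zero =>
    intro S a h
    obtain ⟨j, hj⟩ : ∃ j, j ∉ S := by
      by_contra h'
      push_neg at h'
      have : (Finset.univ : Finset (Fin N)).card ≤ S.card :=
        Finset.card_le_card (fun x _ => h' x)
      simp [Fintype.card_fin] at this
      omega
    apply balanced_of_closed _ j
    intro r hr i hi
    rw [Function.update_of_ne (by rintro rfl; exact hj hi)]
    exact hr i hi
  | succ m ih =>
    intro S a h j c
    rw [reduce_filter_val]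
    by_cases hj : j ∈ S
    · by_cases hc : a j = c
      · have hpe : Finset.univ.filter (fun r : Fin N → ZMod 2 => (∀ i ∈ S, r i = a i) ∧ r j = c)
            = Finset.univ.filter (fun r : Fin N → ZMod 2 => ∀ i ∈ S, r i = a i) := by
          apply Finset.filter_congr
          intro r _
          constructor
          · exact fun hr => hr.1
          · exact fun hr => ⟨hr, by rw [hr j hj, hc]⟩
        rw [hpe]
        exact ih S a (by omega)
      · have hpe : Finset.univ.filter (fun r : Fin N → ZMod 2 => (∀ i ∈ S, r i = a i) ∧ r j = c)
            = ∅ := by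
          apply Finset.filter_false_of_mem
          intro r _ ⟨h1, h2⟩
          exact hc (by rw [← h1 j hj, h2])
        rw [hpe]
        exact safeB_zero_table m
    · have hpe : Finset.univ.filter (fun r : Fin N → ZMod 2 => (∀ i ∈ S, r i = a i) ∧ r j = c)
          = Finset.univ.filter
              (fun r : Fin N → ZMod 2 => ∀ i ∈ insert j S, r i = Function.update a j c i) := by
        apply Finset.filter_congr
        intro r _
        constructor
        · rintro ⟨h1, h2⟩ i hi
          rcases Finset.mem_insert.mp hi with h | hi
          · subst h; rw [Function.update_self]; exact h2
          · rw [Function.update_of_ne (fun h : i = j => hj (h ▸ hi))]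
            exact h1 i hi
        · intro hr
          refine ⟨fun i hi => ?_, ?_⟩
          · have := hr i (Finset.mem_insert_of_mem hi)
            rwa [Function.update_of_ne (fun h : i = j => hj (h ▸ hi))] at this
          · have := hr j (Finset.mem_insert_self j S)
            rwa [Function.update_self] at this
      rw [hpe]
      exact ih (insert j S) (Function.update a j c)
        (by rw [Finset.card_insert_of_notMem hj]; omega)

lemma safeB_foldl {N : ℕ} : ∀ (l : List (Fin N × ZMod 2)) (t : Multiset (Fin N → ZMod 2)),
    safeB l.length t → safeB 0 (l.foldl (fun s p => reduce p.1 p.2 s) t) := by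
  intro l
  induction l with
  | nil => intro t h; exact h
  | cons p l ih =>
    intro t h
    exact ih (reduce p.1 p.2 t) (h p.1 p.2)

lemma foldl_reduce {N : ℕ} : ∀ (l : List (Fin N × ZMod 2)) (t : Multiset (Fin N → ZMod 2)),
    l.foldl (fun s p => reduce p.1 p.2 s) t = t.filter (fun r => ∀ p ∈ l, r p.1 = p.2) := by
  intro l
  induction l with
  | nil => intro t; exact (Multiset.filter_eq_self.mpr (fun _ _ => by simp)).symm
  | cons p l ih =>
    intro t
    show l.foldl _ (reduce p.1 p.2 t) = _
    rw [ih]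
    show Multiset.filter _ (Multiset.filter _ t) = _
    rw [Multiset.filter_filter]
    apply Multiset.filter_congr
    intro r _
    simp only [List.mem_cons]
    constructor
    · rintro ⟨h1, h2⟩ q hq
      rcases hq with rfl | hq
      · exact h2
      · exact h1 q hq
    · intro h
      exact ⟨fun q hq => h q (Or.inr hq), h p (Or.inl rfl)⟩

lemma not_safeB_univ {n : ℕ} :
    ¬ safeB (n + 1) ((Finset.univ : Finset (Fin (n + 1) → ZMod 2)).val) := by
  intro h
  set l : List (Fin (n + 1) × ZMod 2) := (List.finRange (n + 1)).map (fun i => (i, 0)) with hl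
  have hlen : l.length = n + 1 := by simp [hl]
  have h0 := safeB_foldl l _ (by rw [hlen]; exact h)
  rw [foldl_reduce] at h0
  have hfilt : (Finset.univ : Finset (Fin (n + 1) → ZMod 2)).val.filter
      (fun r => ∀ p ∈ l, r p.1 = p.2) = {fun _ => (0 : ZMod 2)} := by
    have : ∀ r : Fin (n + 1) → ZMod 2, (∀ p ∈ l, r p.1 = p.2) ↔ r = (fun _ => 0) := by
      intro r
      constructor
      · intro hr
        funext i
        exact hr (i, 0) (by simp [hl])
      · rintro rfl p hp
        simp [hl] at hp
        obtain ⟨i, rfl⟩ := hp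
        rfl
    rw [Multiset.filter_congr (fun r _ => this r), ← Finset.filter_val,
      Finset.filter_eq']
    simp
  rw [hfilt] at h0
  have hx : xorSum (fun _ : Fin (n + 1) => (0 : ZMod 2)) = 0 := by
    simp [xorSum]
  simp only [safeB] at h0
  rw [Multiset.filter_singleton, Multiset.filter_singleton] at h0
  rw [if_pos hx, if_neg (by rw [hx]; decide)] at h0
  simp at h0


/-- tightness. The full-support uniform table (each vector of
{0,1}^(n+1) exactly once) is (1,n,n+1)-safe but not (1,n+1,n+1)-safe. -/
theorem identity_gadget_tight (n : ℕ) (hn : 1 ≤ n) :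
    safeB n ((Finset.univ : Finset (Fin (n + 1) → ZMod 2)).val) ∧
      ¬ safeB (n + 1) ((Finset.univ : Finset (Fin (n + 1) → ZMod 2)).val) := by
  constructor
  · have h := safe_filter n (∅ : Finset (Fin (n + 1))) (fun _ => 0)
      (by simp)
    have he : Finset.univ.filter
        (fun r : Fin (n + 1) → ZMod 2 => ∀ i ∈ (∅ : Finset (Fin (n + 1))), r i = 0)
        = Finset.univ := by
      apply Finset.filter_true_of_mem
      intro r _ i hi
      exact absurd hi (Finset.notMem_empty i)
    rwa [he] at h
  · exact not_safeB_univ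
end

section
/- Safety of restrictions to pairs of secrets mapping to distinct outputs: let t1 be (x,n+1)-deterministic with output function f: {0,1}^x → {0,1}, and (x, m1, n+1)-safe. Let b, b' ∈ {0,1}^x with f(b) ≠ f(b'), and let t1' be the table of output blocks (last n+1 columns) of rows in the b- and b'-restrictions of t1, combined as a single multiset. Then t1', regarded as an (n+1)-column table whose single 'secret' is the XOR-sum of a row, is (1, m1, n+1)-safe. -/
lemma key {x n N1 : ℕ} (hN1 : x * (n + 1) ≤ N1) (hout : n + 1 ≤ N1)
    (f : (Fin x → ZMod 2) → ZMod 2)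
    (b b' : Fin x → ZMod 2) (hneq : f b ≠ f b') :
    ∀ m (t : Multiset (Fin N1 → ZMod 2)),
      (∀ r ∈ t, lastSum hout r = f (fun i => blockSum hN1 i r)) →
      safe hN1 m t →
      safeB m ((restrict hN1 b t + restrict hN1 b' t).map (lastProj hout)) := by
  intro m
  induction m with
  | zero =>
    intro t hdet hsafe
    have hb : ∀ r ∈ restrict hN1 b t, lastSum hout r = f b := by
      intro r hr
      rw [restrict, Multiset.mem_filter] at hr
      rw [hdet r hr.1]
      exact congrArg f (funext hr.2)
    have hb' : ∀ r ∈ restrict hN1 b' t, lastSum hout r = f b' := by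
      intro r hr
      rw [restrict, Multiset.mem_filter] at hr
      rw [hdet r hr.1]
      exact congrArg f (funext hr.2)
    have hcard : (restrict hN1 b t).card = (restrict hN1 b' t).card := hsafe b b'
    have hfil : ∀ c : ZMod 2,
        ((restrict hN1 b t + restrict hN1 b' t).map (lastProj hout)).filter
          (fun r => xorSum r = c)
        = ((restrict hN1 b t).filter (fun r => lastSum hout r = c)
          + (restrict hN1 b' t).filter (fun r => lastSum hout r = c)).map (lastProj hout) := by
      intro c
      rw [Multiset.filter_map, Multiset.filter_add]
      rfl
    have h2 : ∀ a : ZMod 2, a = 0 ∨ a = 1 := by decide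
    have main : ∀ c c' : ZMod 2, f b = c → f b' = c' →
        (((restrict hN1 b t + restrict hN1 b' t).map (lastProj hout)).filter
          (fun r => xorSum r = c)).card
        = (((restrict hN1 b t + restrict hN1 b' t).map (lastProj hout)).filter
          (fun r => xorSum r = c')).card := by
      intro c c' hc hc'
      have hcc' : c ≠ c' := hc ▸ hc' ▸ hneq
      rw [hfil, hfil, Multiset.card_map, Multiset.card_map,
        Multiset.filter_eq_self.2 (fun r hr => (hb r hr).trans hc),
        Multiset.filter_eq_nil.2 (fun r hr h => hcc' (by rw [← hc', ← hb' r hr, h])),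
        Multiset.filter_eq_nil.2 (fun r hr h => hcc' (by rw [← hc, ← hb r hr, h])),
        Multiset.filter_eq_self.2 (fun r hr => (hb' r hr).trans hc')]
      simpa using hcard
    show _ = _
    rcases h2 (f b) with hc | hc <;> rcases h2 (f b') with hc' | hc'
    · exact absurd (hc.trans hc'.symm) hneq
    · exact main 0 1 hc hc'
    · exact (main 1 0 hc hc').symm
    · exact absurd (hc.trans hc'.symm) hneq
  | succ m ih =>
    intro t hdet hsafe j c
    set j' : Fin N1 := ⟨N1 - (n + 1) + j.1, by have := j.2; omega⟩ with hj'
    have hcomm : reduce j c ((restrict hN1 b t + restrict hN1 b' t).map (lastProj hout))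
        = (restrict hN1 b (reduce j' c t) + restrict hN1 b' (reduce j' c t)).map (lastProj hout) := by
      rw [reduce, Multiset.filter_map]
      have : ((restrict hN1 b t + restrict hN1 b' t).filter
          (fun r => lastProj hout r j = c))
          = restrict hN1 b (reduce j' c t) + restrict hN1 b' (reduce j' c t) := by
        simp only [restrict, reduce, Multiset.filter_add, Multiset.filter_filter]
        congr 1 <;> exact Multiset.filter_congr (fun r _ => by
          show (lastProj hout r j = c ∧ _) ↔ _
          unfold lastProj
          exact and_comm)
      rw [← this]
      rfl
    rw [hcomm]
    exact ih (reduce j' c t)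
      (fun r hr => hdet r (Multiset.mem_of_mem_filter hr))
      (hsafe j' c)


/-- for a deterministic, (x,m1,n+1)-safe table t1 and two secrets
b, b' mapping to distinct outputs, the combined multiset of output blocks of the
b- and b'-restrictions is (1,m1,n+1)-safe (secret = XOR-sum of a row). -/
theorem restriction_pair_safe
    {x n m1 N1 : ℕ} (hN1 : x * (n + 1) ≤ N1) (hout : n + 1 ≤ N1)
    (t1 : Multiset (Fin N1 → ZMod 2))
    (f : (Fin x → ZMod 2) → ZMod 2)
    (hdet : ∀ r ∈ t1, lastSum hout r = f (fun i => blockSum hN1 i r))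
    (hsafe : safe hN1 m1 t1)
    (b b' : Fin x → ZMod 2) (hneq : f b ≠ f b') :
    safeB m1 ((restrict hN1 b t1 + restrict hN1 b' t1).map (lastProj hout)) := by
  exact key hN1 hout f b b' hneq m1 t1 hdet hsafe
end

section
/- Deleting an unfixed column after reduction preserves the safety hierarchy: let t be an (n+1)-column table that is (1, m, n+1)-safe with m ≥ 1, let j be a column and b a bit, and let t' be the reduction of t by (j,b) followed by deletion of column j. Then t' is an n-column table that is (1, m−1, n)-safe. -/
lemma zmod2_iff (x c d : ZMod 2) : x + c = d ↔ x = d + c := by revert x c d; decide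

lemma xorSum_deleteCol {n : ℕ} (j : Fin (n + 1)) (r : Fin (n + 1) → ZMod 2) :
    xorSum (deleteCol j r) = xorSum r + r j := by
  unfold xorSum deleteCol
  have h2 : r j + r j = 0 := by generalize r j = x; fin_cases x <;> decide
  rw [Fin.sum_univ_succAbove (fun i => r i) j, add_comm (r j), add_assoc, h2, add_zero]

lemma map_delete_safe {n : ℕ} (j : Fin (n + 1)) (b : ZMod 2) :
    ∀ (k : ℕ) (s : Multiset (Fin (n + 1) → ZMod 2)),
      (∀ r ∈ s, r j = b) → safeB k s → safeB k (s.map (deleteCol j)) := by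
  intro k
  induction k with
  | zero =>
    intro s hb hs
    simp only [safeB] at hs ⊢
    rw [Multiset.filter_map, Multiset.filter_map, Multiset.card_map, Multiset.card_map]
    have e0 : Multiset.filter ((fun r => xorSum r = 0) ∘ deleteCol j) s
        = Multiset.filter (fun r => xorSum r = b) s := by
      apply Multiset.filter_congr
      intro r hr
      show xorSum (deleteCol j r) = 0 ↔ _
      rw [xorSum_deleteCol, hb r hr]
      exact (zmod2_iff _ _ _).trans (by rw [zero_add])
    have e1 : Multiset.filter ((fun r => xorSum r = 1) ∘ deleteCol j) s
        = Multiset.filter (fun r => xorSum r = b + 1) s := by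
      apply Multiset.filter_congr
      intro r hr
      show xorSum (deleteCol j r) = 1 ↔ _
      rw [xorSum_deleteCol, hb r hr]
      exact (zmod2_iff _ _ _).trans (by rw [add_comm 1 b])
    rw [e0, e1]
    fin_cases b
    · exact hs
    · exact hs.symm
  | succ k ih =>
    intro s hb hs
    intro j' c
    have key : reduce j' c (s.map (deleteCol j))
        = (reduce (j.succAbove j') c s).map (deleteCol j) := by
      unfold reduce
      rw [Multiset.filter_map]
      rfl
    rw [key]
    apply ih
    · intro r hr
      exact hb r (Multiset.mem_of_mem_filter hr)
    · exact hs (j.succAbove j') c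

/-- reducing a (1,m,n+1)-safe table at column j (to bit b) and
then deleting column j yields a (1,m-1,n)-safe n-column table. -/
theorem reduce_delete_safe (n m : ℕ) (hm : 1 ≤ m)
    (t : Multiset (Fin (n + 1) → ZMod 2)) (h : safeB m t)
    (j : Fin (n + 1)) (b : ZMod 2) :
    safeB (m - 1) ((reduce j b t).map (deleteCol j)) := by
  obtain ⟨k, rfl⟩ : ∃ k, m = k + 1 := ⟨m - 1, by omega⟩
  simp only [Nat.add_sub_cancel]
  apply map_delete_safe
  · intro r hr
    simp only [reduce, Multiset.mem_filter] at hr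
    exact hr.2
  · exact h j b
end
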